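/- Let p be a prime, q = p^e a power of p, ℓ an odd prime different from p, and n a positive integer divisible by neither p nor ℓ. Let γ be an integer, τ the least positive integer with γ·q^τ ≡ γ (mod n), and assume ℓ does not divide q^τ − 1; set ρ = ord_ℓ(q^τ), and assume v_ℓ(q^{τρ} − 1) = 1. Then for every f ≥ 1: the number of q-cyclotomic cosets modulo ℓ^f n whose projection to ℤ/nℤ equals c_{n/q}(γ) is f·(ℓ−1)/ρ + 1; for each 0 ≤ m ≤ f−1 exactly (ℓ−1)/ρ of these cosets have size ℓ^{f−m−1}·ρ·τ, and exactly one has size τ. -/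

import Mathlib

/-- The `q`-cyclotomic coset modulo `m` containing (the class of) the integer `γ`,
as a subset of `ZMod m`. -/
def cycCoset (q m : ℕ) (γ : ℤ) : Set (ZMod m) :=
  {x | ∃ j : ℕ, x = (γ : ZMod m) * (q : ZMod m) ^ j}

section aux

lemma modEq_iff_cast {M : ℕ} (x y : ℤ) : x ≡ y [ZMOD (M:ℤ)] ↔ (x : ZMod M) = (y : ZMod M) :=
  (ZMod.intCast_eq_intCast_iff x y M).symm

lemma cycCoset_eq_iff {q M : ℕ} {d : ℕ} (hd : 0 < d) (hq1 : ((q : ZMod M))^d = 1)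
    (δ δ' : ℤ) :
    cycCoset q M δ = cycCoset q M δ' ↔ ∃ j : ℕ, (δ' : ZMod M) = δ * (q : ZMod M)^j := by
  constructor
  · intro h
    have h0 : (δ' : ZMod M) ∈ cycCoset q M δ' := ⟨0, by simp⟩
    rw [← h] at h0; exact h0
  · rintro ⟨j, hj⟩
    have harith : j + j * (d - 1) = d * j := by
      cases d with
      | zero => omega
      | succ k => simp [Nat.succ_sub_one]; ring
    have hsymm : (δ : ZMod M) = δ' * (q : ZMod M)^(j*(d-1)) := by
      rw [hj, mul_assoc, ← pow_add, harith, pow_mul, hq1, one_pow, mul_one]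
    ext x
    simp only [cycCoset, Set.mem_setOf_eq]
    constructor
    · rintro ⟨i, rfl⟩
      exact ⟨j*(d-1) + i, by rw [hsymm, mul_assoc, ← pow_add]⟩
    · rintro ⟨i, rfl⟩
      exact ⟨j + i, by rw [hj, mul_assoc, ← pow_add]⟩

lemma period_congr {q M : ℕ} {δ δ' : ℤ} {s : ℕ} (h : (δ' : ZMod M) = δ * (q : ZMod M)^s)
    {j : ℕ} (hper : δ * (q:ℤ)^j ≡ δ [ZMOD (M:ℤ)]) : δ' * (q:ℤ)^j ≡ δ' [ZMOD (M:ℤ)] := by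
  rw [modEq_iff_cast] at hper ⊢
  push_cast at hper ⊢
  rw [h, mul_assoc, mul_comm ((q:ZMod M)^s), ← mul_assoc, hper]

/-- projection of a coset is a coset -/
lemma proj_cycCoset {q M n : ℕ} (h : n ∣ M) (δ : ℤ) :
    (ZMod.castHom h (ZMod n)) '' cycCoset q M δ = cycCoset q n δ := by
  ext x
  simp only [cycCoset, Set.mem_image, Set.mem_setOf_eq]
  constructor
  · rintro ⟨y, ⟨j, rfl⟩, rfl⟩
    exact ⟨j, by simp [map_mul, map_pow, map_intCast, map_natCast]⟩
  · rintro ⟨j, rfl⟩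
    exact ⟨(δ : ZMod M) * (q : ZMod M)^j, ⟨j, rfl⟩, by simp [map_mul, map_pow, map_intCast, map_natCast]⟩

end aux

lemma padicValInt_eq_emultiplicity' {ℓ : ℕ} [Fact ℓ.Prime] {z : ℤ} (hz : z ≠ 0) :
    (padicValInt ℓ z : ℕ∞) = emultiplicity (ℓ:ℤ) z := by
  rw [padicValInt, padicValNat_eq_emultiplicity (Int.natAbs_ne_zero.mpr hz),
    Int.emultiplicity_natAbs]

lemma lte_val {ℓ : ℕ} (hℓ : ℓ.Prime) (hℓ2 : ℓ ≠ 2) {A : ℤ} (hA : 2 ≤ A)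
    (hd : (ℓ:ℤ) ∣ A - 1) (hv1 : padicValInt ℓ (A - 1) = 1)
    {t : ℕ} (ht : 0 < t) : padicValInt ℓ (A^t - 1) = 1 + padicValNat ℓ t := by
  haveI : Fact ℓ.Prime := ⟨hℓ⟩
  have hx : ¬ (ℓ:ℤ) ∣ A := by
    intro h
    have h1 : (ℓ:ℤ) ∣ 1 := by
      have := dvd_sub h hd; simpa using this
    have := Int.le_of_dvd one_pos h1
    have := hℓ.two_le; omega
  have hA1 : A - 1 ≠ 0 := by omega
  have hAt : A^t - 1 ≠ 0 := by
    have : 1 < A^t := one_lt_pow₀ (by omega : (1:ℤ) < A) ht.ne'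
    omega
  have key := Int.emultiplicity_pow_sub_pow hℓ (hℓ.odd_of_ne_two hℓ2) (by simpa using hd)
    hx t
  rw [one_pow] at key
  rw [← padicValInt_eq_emultiplicity' hAt, ← padicValInt_eq_emultiplicity' hA1,
    ← padicValNat_eq_emultiplicity ht.ne', hv1] at key
  exact_mod_cast key

section ord
variable {q ℓ τ ρ : ℕ}

lemma pow_one_mod_ell (hρ : ρ = orderOf ((q : ZMod ℓ)^τ)) (k : ℕ) :
    (ℓ:ℤ) ∣ (q:ℤ)^(τ*k) - 1 ↔ ρ ∣ k := by
  rw [← ZMod.intCast_zmod_eq_zero_iff_dvd, hρ, orderOf_dvd_iff_pow_eq_one]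
  push_cast
  rw [pow_mul, sub_eq_zero]

lemma ord_iff (hℓ : ℓ.Prime) (hℓ2 : ℓ ≠ 2) (hq2 : 2 ≤ q) (hτ0 : 0 < τ) (hρ0 : 0 < ρ)
    (hρ : ρ = orderOf ((q : ZMod ℓ)^τ))
    (hv : padicValInt ℓ ((q : ℤ) ^ (τ * ρ) - 1) = 1)
    {s : ℕ} (hs : 1 ≤ s) (k : ℕ) :
    (ℓ:ℤ)^s ∣ (q:ℤ)^(τ*k) - 1 ↔ ρ * ℓ^(s-1) ∣ k := by
  haveI : Fact ℓ.Prime := ⟨hℓ⟩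
  have hq2' : (2:ℤ) ≤ (q:ℤ) := by exact_mod_cast hq2
  have hA2 : 2 ≤ (q:ℤ)^(τ*ρ) :=
    hq2'.trans (le_self_pow₀ (by omega) (Nat.mul_ne_zero hτ0.ne' hρ0.ne'))
  have hdA : (ℓ:ℤ) ∣ (q:ℤ)^(τ*ρ) - 1 := (pow_one_mod_ell hρ ρ).mpr dvd_rfl
  rcases Nat.eq_zero_or_pos k with rfl | hk
  · simp
  have hpow : ∀ t : ℕ, (q:ℤ)^(τ*(ρ*t)) = ((q:ℤ)^(τ*ρ))^t := by
    intro t; rw [← pow_mul, mul_assoc]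
  constructor
  · intro h
    have hρk : ρ ∣ k := by
      rw [← pow_one_mod_ell hρ k]
      exact (dvd_pow_self (ℓ:ℤ) (by omega : s ≠ 0)).trans h
    obtain ⟨t, rfl⟩ := hρk
    have ht : 0 < t := Nat.pos_of_ne_zero (by rintro rfl; simp at hk)
    have hval := lte_val hℓ hℓ2 hA2 hdA hv ht
    rw [← hpow t] at hval
    have hne : (q:ℤ)^(τ*(ρ*t)) - 1 ≠ 0 := by
      have : 1 < (q:ℤ)^(τ*(ρ*t)) :=
        one_lt_pow₀ (by omega : (1:ℤ) < q) (by positivity)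
      omega
    have hle : s ≤ padicValInt ℓ ((q:ℤ)^(τ*(ρ*t)) - 1) := by
      rcases (padicValInt_dvd_iff s _).mp h with h0 | h0
      · exact absurd h0 hne
      · exact h0
    rw [hval] at hle
    have : ℓ^(s-1) ∣ t := by
      rw [padicValNat_dvd_iff_le ht.ne']
      omega
    exact mul_dvd_mul_left ρ this
  · rintro ⟨t, rfl⟩
    have ht : 0 < t := Nat.pos_of_ne_zero (by rintro rfl; simp at hk)
    have hℓ0 : 0 < ℓ := hℓ.pos
    have hst : 0 < ℓ^(s-1)*t := by positivity
    have e1 : ρ * ℓ^(s-1) * t = ρ * (ℓ^(s-1) * t) := by ring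
    rw [e1, hpow]
    have hval := lte_val hℓ hℓ2 hA2 hdA hv hst
    rw [padicValInt_dvd_iff]
    right
    rw [hval]
    have : s - 1 ≤ padicValNat ℓ (ℓ^(s-1)*t) := by
      rw [← padicValNat_dvd_iff_le hst.ne']
      exact dvd_mul_right _ _
    omega

end ord

section mid
variable {q ℓ n τ f : ℕ} {γ : ℤ} {D : ℤ → ℤ}

lemma tau_dvd_iff (hτ : IsLeast {t : ℕ | 0 < t ∧ γ * (q : ℤ) ^ t ≡ γ [ZMOD (n : ℤ)]} τ)
    (j : ℕ) : γ * (q:ℤ)^j ≡ γ [ZMOD (n:ℤ)] ↔ τ ∣ j := by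
  obtain ⟨⟨hτ0, hτc⟩, hleast⟩ := hτ
  have hmul : ∀ s : ℕ, γ * (q:ℤ)^(τ*s) ≡ γ [ZMOD (n:ℤ)] := by
    intro s
    induction s with
    | zero => simp
    | succ k ih =>
      have e1 : τ*(k+1) = τ + τ*k := by ring
      rw [e1, pow_add, ← mul_assoc]
      exact (hτc.mul_right _).trans ih
  constructor
  · intro hj
    have hdm : j = τ * (j / τ) + j % τ := (Nat.div_add_mod j τ).symm
    have h2 : γ * (q:ℤ)^(j % τ) ≡ γ [ZMOD (n:ℤ)] := by
      have h3 := (hmul (j/τ)).mul_right ((q:ℤ)^(j % τ))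
      rw [mul_assoc, ← pow_add, ← hdm] at h3
      exact (h3.symm.trans hj)
    by_contra hnd
    have hr0 : 0 < j % τ := by
      rcases Nat.eq_zero_or_pos (j % τ) with h | h
      · exact absurd (Nat.dvd_of_mod_eq_zero h) hnd
      · exact h
    have := hleast ⟨hr0, h2⟩
    have := Nat.mod_lt j hτ0
    omega
  · rintro ⟨s, rfl⟩
    exact hmul s

lemma crt_split (hco : Nat.Coprime (ℓ^f) n) (x y : ℤ) :
    x ≡ y [ZMOD ((ℓ^f*n : ℕ):ℤ)] ↔
      (x ≡ y [ZMOD ((ℓ^f : ℕ):ℤ)] ∧ x ≡ y [ZMOD (n:ℤ)]) := by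
  have : ((ℓ^f*n : ℕ):ℤ) = ((ℓ^f : ℕ):ℤ) * (n:ℤ) := by push_cast; ring
  rw [this, ← Int.modEq_and_modEq_iff_modEq_mul]
  simp only [Int.natAbs_natCast]
  exact hco

lemma per_iff (hco : Nat.Coprime (ℓ^f) n)
    (hτ : IsLeast {t : ℕ | 0 < t ∧ γ * (q : ℤ) ^ t ≡ γ [ZMOD (n : ℤ)]} τ)
    (hDγ : ∀ a : ℤ, D a ≡ γ [ZMOD (n:ℤ)])
    (hDa : ∀ a : ℤ, D a ≡ a [ZMOD ((ℓ^f : ℕ):ℤ)])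
    (a : ℤ) (j : ℕ) :
    D a * (q:ℤ)^j ≡ D a [ZMOD ((ℓ^f*n : ℕ):ℤ)] ↔
      (τ ∣ j ∧ (ℓ:ℤ)^f ∣ a * ((q:ℤ)^j - 1)) := by
  rw [crt_split hco]
  have h1 : (D a * (q:ℤ)^j ≡ D a [ZMOD ((ℓ^f : ℕ):ℤ)]) ↔ (ℓ:ℤ)^f ∣ a * ((q:ℤ)^j - 1) := by
    constructor
    · intro h
      have h2 := ((hDa a).symm.mul_right ((q:ℤ)^j)).trans (h.trans (hDa a))
      have h3 := Int.ModEq.dvd h2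
      have : a - a * (q:ℤ)^j = -(a * ((q:ℤ)^j - 1)) := by ring
      rw [this, dvd_neg] at h3
      exact_mod_cast h3
    · intro h
      have h3 : ((ℓ^f : ℕ):ℤ) ∣ a - a * (q:ℤ)^j := by
        have : a - a * (q:ℤ)^j = -(a * ((q:ℤ)^j - 1)) := by ring
        rw [this, dvd_neg]
        exact_mod_cast h
      have h2 : a * (q:ℤ)^j ≡ a [ZMOD ((ℓ^f : ℕ):ℤ)] := Int.modEq_of_dvd h3
      exact ((hDa a).mul_right _).trans (h2.trans (hDa a).symm)
  have h2 : (D a * (q:ℤ)^j ≡ D a [ZMOD (n:ℤ)]) ↔ τ ∣ j := by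
    rw [← tau_dvd_iff hτ j]
    constructor
    · intro h
      exact ((hDγ a).symm.mul_right ((q:ℤ)^j)).trans (h.trans (hDγ a))
    · intro h
      exact ((hDγ a).mul_right _).trans (h.trans (hDγ a).symm)
  rw [h1, h2]
  exact and_comm

lemma val_divide (hℓ : ℓ.Prime) {a : ℤ} (ha : a ≠ 0) {m : ℕ} (hm : padicValInt ℓ a = m)
    (hmf : m ≤ f) (c : ℤ) : (ℓ:ℤ)^f ∣ a * c ↔ (ℓ:ℤ)^(f-m) ∣ c := by
  haveI : Fact ℓ.Prime := ⟨hℓ⟩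
  obtain ⟨b, hb⟩ : (ℓ:ℤ)^m ∣ a := by rw [← hm]; exact padicValInt_dvd a
  have hnb : ¬ (ℓ:ℤ) ∣ b := by
    intro ⟨c', hc'⟩
    have : (ℓ:ℤ)^(m+1) ∣ a := ⟨c', by rw [hb, hc']; ring⟩
    rcases (padicValInt_dvd_iff (m+1) a).mp this with h | h
    · exact ha h
    · omega
  have hcop : IsCoprime ((ℓ:ℤ)^(f-m)) b :=
    (((Nat.prime_iff_prime_int.mp hℓ).coprime_iff_not_dvd).mpr hnb).pow_left
  have e1 : (ℓ:ℤ)^f = (ℓ:ℤ)^m * (ℓ:ℤ)^(f-m) := by rw [← pow_add]; congr 1; omega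
  rw [hb, e1, mul_assoc, mul_dvd_mul_iff_left (pow_ne_zero m (by exact_mod_cast hℓ.ne_zero))]
  constructor
  · intro h
    exact hcop.dvd_of_dvd_mul_left h
  · intro h
    exact Dvd.dvd.mul_left h b

end mid
section least
variable {q ℓ n τ ρ f : ℕ} {γ : ℤ} {D : ℤ → ℤ}

lemma least_nonzero (hℓ : ℓ.Prime) (hℓ2 : ℓ ≠ 2) (hq2 : 2 ≤ q) (hρ0 : 0 < ρ)
    (hρ : ρ = orderOf ((q : ZMod ℓ)^τ))
    (hv : padicValInt ℓ ((q : ℤ) ^ (τ * ρ) - 1) = 1)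
    (hco : Nat.Coprime (ℓ^f) n)
    (hτ : IsLeast {t : ℕ | 0 < t ∧ γ * (q : ℤ) ^ t ≡ γ [ZMOD (n : ℤ)]} τ)
    (hDγ : ∀ a : ℤ, D a ≡ γ [ZMOD (n:ℤ)])
    (hDa : ∀ a : ℤ, D a ≡ a [ZMOD ((ℓ^f : ℕ):ℤ)])
    {a : ℤ} (ha : a ≠ 0) {m : ℕ} (hm : padicValInt ℓ a = m) (hmf : m < f) :
    IsLeast {j : ℕ | 0 < j ∧ D a * (q:ℤ)^j ≡ D a [ZMOD ((ℓ^f*n : ℕ):ℤ)]}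
      (ℓ^(f-m-1) * ρ * τ) := by
  have hτ0 : 0 < τ := hτ.1.1
  have key : ∀ j : ℕ, (D a * (q:ℤ)^j ≡ D a [ZMOD ((ℓ^f*n : ℕ):ℤ)]) ↔
      (ℓ^(f-m-1) * ρ * τ) ∣ j := by
    intro j
    rw [per_iff hco hτ hDγ hDa a j]
    constructor
    · rintro ⟨⟨k, rfl⟩, h2⟩
      have h3 : (ℓ:ℤ)^(f-m) ∣ (q:ℤ)^(τ*k) - 1 :=
        (val_divide hℓ ha hm hmf.le _).mp h2
      have h4 : ρ * ℓ^(f-m-1) ∣ k := by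
        have := (ord_iff hℓ hℓ2 hq2 hτ0 hρ0 hρ hv (by omega : 1 ≤ f - m) k).mp
        have e : (f-m)-1 = f-m-1 := rfl
        exact e ▸ this h3
      obtain ⟨d, rfl⟩ := h4
      exact ⟨d, by ring⟩
    · rintro ⟨d, rfl⟩
      constructor
      · exact ⟨ℓ^(f-m-1) * ρ * d, by ring⟩
      · rw [val_divide hℓ ha hm hmf.le]
        have e : ℓ^(f-m-1) * ρ * τ * d = τ * (ρ * ℓ^((f-m)-1) * d) := by
          have : (f-m)-1 = f-m-1 := rfl
          rw [this]; ring
        rw [e]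
        exact (ord_iff hℓ hℓ2 hq2 hτ0 hρ0 hρ hv (by omega : 1 ≤ f - m) _).mpr
          ⟨d, by ring⟩
  have hpos : 0 < ℓ^(f-m-1) * ρ * τ := by
    have := hℓ.pos
    positivity
  exact ⟨⟨hpos, (key _).mpr dvd_rfl⟩, fun j hj => Nat.le_of_dvd hj.1 ((key j).mp hj.2)⟩

lemma least_zero (hco : Nat.Coprime (ℓ^f) n)
    (hτ : IsLeast {t : ℕ | 0 < t ∧ γ * (q : ℤ) ^ t ≡ γ [ZMOD (n : ℤ)]} τ)
    (hDγ : ∀ a : ℤ, D a ≡ γ [ZMOD (n:ℤ)])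
    (hDa : ∀ a : ℤ, D a ≡ a [ZMOD ((ℓ^f : ℕ):ℤ)])
    {a : ℤ} (hdvd : (ℓ:ℤ)^f ∣ a) :
    IsLeast {j : ℕ | 0 < j ∧ D a * (q:ℤ)^j ≡ D a [ZMOD ((ℓ^f*n : ℕ):ℤ)]} τ := by
  have key : ∀ j : ℕ, (D a * (q:ℤ)^j ≡ D a [ZMOD ((ℓ^f*n : ℕ):ℤ)]) ↔ τ ∣ j := by
    intro j
    rw [per_iff hco hτ hDγ hDa a j]
    constructor
    · rintro ⟨h1, _⟩; exact h1
    · intro h1; exact ⟨h1, hdvd.mul_right _⟩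
  exact ⟨⟨hτ.1.1, (key _).mpr dvd_rfl⟩, fun j hj => Nat.le_of_dvd hj.1 ((key j).mp hj.2)⟩

lemma cosetD_eq_iff {d : ℕ} (hd : 0 < d) (hq1 : ((q : ZMod (ℓ^f*n)))^d = 1)
    (hco : Nat.Coprime (ℓ^f) n)
    (hτ : IsLeast {t : ℕ | 0 < t ∧ γ * (q : ℤ) ^ t ≡ γ [ZMOD (n : ℤ)]} τ)
    (hDγ : ∀ a : ℤ, D a ≡ γ [ZMOD (n:ℤ)])
    (hDa : ∀ a : ℤ, D a ≡ a [ZMOD ((ℓ^f : ℕ):ℤ)])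
    (a b : ℤ) :
    cycCoset q (ℓ^f*n) (D a) = cycCoset q (ℓ^f*n) (D b) ↔
      ∃ k : ℕ, b ≡ a * (q:ℤ)^(τ*k) [ZMOD ((ℓ^f : ℕ):ℤ)] := by
  rw [cycCoset_eq_iff hd hq1]
  have cast_iff : ∀ (x y : ℤ) (j : ℕ),
      ((y : ZMod (ℓ^f*n)) = (x : ZMod (ℓ^f*n)) * (q : ZMod (ℓ^f*n))^j) ↔
        y ≡ x * (q:ℤ)^j [ZMOD ((ℓ^f*n : ℕ):ℤ)] := by
    intro x y j
    rw [modEq_iff_cast]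
    push_cast
    rfl
  constructor
  · rintro ⟨j, hj⟩
    rw [cast_iff] at hj
    rw [crt_split hco] at hj
    obtain ⟨hjl, hjn⟩ := hj
    have hγ : γ * (q:ℤ)^j ≡ γ [ZMOD (n:ℤ)] := by
      have h1 : D b ≡ γ [ZMOD (n:ℤ)] := hDγ b
      have h2 : D a * (q:ℤ)^j ≡ γ * (q:ℤ)^j [ZMOD (n:ℤ)] := (hDγ a).mul_right _
      exact h2.symm.trans (hjn.symm.trans h1)
    obtain ⟨k, rfl⟩ := (tau_dvd_iff hτ j).mp hγ
    refine ⟨k, ?_⟩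
    have h1 : b ≡ D b [ZMOD ((ℓ^f : ℕ):ℤ)] := (hDa b).symm
    have h2 : D a * (q:ℤ)^(τ*k) ≡ a * (q:ℤ)^(τ*k) [ZMOD ((ℓ^f : ℕ):ℤ)] := (hDa a).mul_right _
    exact h1.trans (hjl.trans h2)
  · rintro ⟨k, hk⟩
    refine ⟨τ*k, ?_⟩
    rw [cast_iff, crt_split hco]
    constructor
    · exact (hDa b).trans (hk.trans ((hDa a).symm.mul_right _))
    · have hγ : γ * (q:ℤ)^(τ*k) ≡ γ [ZMOD (n:ℤ)] := (tau_dvd_iff hτ _).mpr ⟨k, rfl⟩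
      exact (hDγ b).trans (hγ.symm.trans ((hDγ a).symm.mul_right _))

end least
section groupcount

open Subgroup

lemma orbit_count {G X : Type*} [Group G] [Finite G] (U : G) (Φ : G → X) (A : Set X)
    (hΦ : ∀ u u' : G, Φ u = Φ u' ↔ ∃ k : ℕ, u' = u * U^k)
    (hrange : Set.range Φ = A) :
    A.ncard = Nat.card (G ⧸ Subgroup.zpowers U) := by
  set H := Subgroup.zpowers U with hH
  have hwd : ∀ a b : G, (QuotientGroup.leftRel H) a b → Φ a = Φ b := by
    intro a b hab
    rw [QuotientGroup.leftRel_apply] at hab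
    rw [← mem_powers_iff_mem_zpowers, Submonoid.mem_powers_iff] at hab
    obtain ⟨k, hk⟩ := hab
    rw [hΦ]
    exact ⟨k, by rw [hk]; group⟩
  let g : G ⧸ H → X := Quotient.lift Φ hwd
  have hginj : Function.Injective g := by
    intro x y
    induction x using Quotient.inductionOn with
    | h a =>
    induction y using Quotient.inductionOn with
    | h b =>
    intro hab
    have : Φ a = Φ b := hab
    obtain ⟨k, hk⟩ := (hΦ a b).mp this
    have hmem : a⁻¹ * b ∈ Submonoid.powers U := ⟨k, by rw [hk]; group⟩
    exact Quotient.sound (QuotientGroup.leftRel_apply.mpr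
      (mem_powers_iff_mem_zpowers.mp hmem))
  have hgrange : Set.range g = A := by
    rw [← hrange]
    ext x
    constructor
    · rintro ⟨y, rfl⟩
      induction y using Quotient.inductionOn with
      | h a => exact ⟨a, rfl⟩
    · rintro ⟨a, rfl⟩
      exact ⟨⟦a⟧, rfl⟩
  rw [← hgrange, ← Nat.card_coe_set_eq]
  exact Nat.card_congr (Equiv.ofInjective g hginj).symm

lemma unit_order {q ℓ τ ρ : ℕ} (hℓ : ℓ.Prime) (hℓ2 : ℓ ≠ 2) (hq2 : 2 ≤ q) (hτ0 : 0 < τ)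
    (hρ0 : 0 < ρ) (hρ : ρ = orderOf ((q : ZMod ℓ)^τ))
    (hv : padicValInt ℓ ((q : ℤ) ^ (τ * ρ) - 1) = 1)
    {s : ℕ} (hs : 1 ≤ s) (U : (ZMod (ℓ^s))ˣ) (hU : (U : ZMod (ℓ^s)) = (q : ZMod (ℓ^s))^τ) :
    (∀ k : ℕ, (U^k = 1 ↔ ρ * ℓ^(s-1) ∣ k)) ∧ orderOf U = ρ * ℓ^(s-1) := by
  have key : ∀ k : ℕ, U^k = 1 ↔ ρ * ℓ^(s-1) ∣ k := by
    intro k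
    rw [← ord_iff hℓ hℓ2 hq2 hτ0 hρ0 hρ hv hs k]
    have h2 : (((q:ℤ)^(τ*k) - 1 : ℤ) : ZMod (ℓ^s)) = (q : ZMod (ℓ^s))^(τ*k) - 1 := by
      push_cast; ring
    rw [Units.ext_iff, Units.val_pow_eq_pow_val, hU, Units.val_one, ← pow_mul,
      show ((ℓ:ℤ)^s) = ((ℓ^s : ℕ) : ℤ) by push_cast; ring,
      ← ZMod.intCast_zmod_eq_zero_iff_dvd, h2, sub_eq_zero]
  refine ⟨key, Nat.dvd_antisymm (orderOf_dvd_of_pow_eq_one ((key _).mpr dvd_rfl))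
    ((key _).mp (pow_orderOf_eq_one U))⟩

end groupcount
lemma quot_card {ℓ ρ s : ℕ} (hℓ : ℓ.Prime) (hs : 1 ≤ s) (hρ0 : 0 < ρ) (hρdvd : ρ ∣ ℓ - 1)
    (U : (ZMod (ℓ^s))ˣ) (hord : orderOf U = ρ * ℓ^(s-1)) :
    Nat.card ((ZMod (ℓ^s))ˣ ⧸ Subgroup.zpowers U) = (ℓ-1)/ρ := by
  haveI : NeZero (ℓ^s) := ⟨pow_ne_zero s hℓ.ne_zero⟩
  have hcardG : Nat.card (ZMod (ℓ^s))ˣ = ℓ^(s-1) * (ℓ-1) := by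
    rw [Nat.card_eq_fintype_card, ZMod.card_units_eq_totient,
      Nat.totient_prime_pow hℓ (by omega)]
  have heq := Subgroup.card_eq_card_quotient_mul_card_subgroup (Subgroup.zpowers U)
  rw [Nat.card_zpowers, hord, hcardG] at heq
  obtain ⟨w, hw⟩ := hρdvd
  rw [hw, Nat.mul_div_cancel_left w hρ0]
  have hpos : 0 < ρ * ℓ^(s-1) := by
    have := hℓ.pos; positivity
  apply Nat.eq_of_mul_eq_mul_right hpos
  rw [← heq, hw]; ring

lemma ncard_biUnion_of_disjoint {X : Type*} [Finite X] (s : Finset ℕ) (B : ℕ → Set X)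
    (hdisj : ∀ m₁ ∈ s, ∀ m₂ ∈ s, m₁ ≠ m₂ → Disjoint (B m₁) (B m₂)) :
    (⋃ m ∈ s, B m).ncard = ∑ m ∈ s, (B m).ncard := by
  classical
  induction s using Finset.induction_on with
  | empty => simp
  | @insert a s ha ih =>
    rw [Finset.set_biUnion_insert, Finset.sum_insert ha,
      Set.ncard_union_eq ?dj (Set.toFinite _) (Set.toFinite _),
      ih (fun m₁ h1 m₂ h2 hne => hdisj m₁ (Finset.mem_insert_of_mem h1)
        m₂ (Finset.mem_insert_of_mem h2) hne)]
    case dj =>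
      rw [Set.disjoint_iUnion₂_right]
      intro i hi
      exact hdisj a (Finset.mem_insert_self a s) i (Finset.mem_insert_of_mem hi)
        (fun h => ha (h ▸ hi))

theorem stmt_19 (p e q ℓ n : ℕ) (hp : p.Prime) (he : 0 < e) (hq : q = p ^ e)
    (hℓ : ℓ.Prime) (hℓ2 : ℓ ≠ 2) (hℓp : ℓ ≠ p)
    (hn : 0 < n) (hnp : ¬ p ∣ n) (hnℓ : ¬ ℓ ∣ n)
    (γ : ℤ) (τ : ℕ)
    (hτ : IsLeast {t : ℕ | 0 < t ∧ γ * (q : ℤ) ^ t ≡ γ [ZMOD (n : ℤ)]} τ)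
    (hnd : ¬ (ℓ : ℤ) ∣ (q : ℤ) ^ τ - 1)
    (ρ : ℕ) (hρ : ρ = orderOf ((q : ZMod ℓ) ^ τ))
    (hv : padicValInt ℓ ((q : ℤ) ^ (τ * ρ) - 1) = 1) :
    ∀ f : ℕ, 1 ≤ f →
      -- the total number of q-cyclotomic cosets mod ℓ^f n projecting onto c_{n/q}(γ)
      {C : Set (ZMod (ℓ ^ f * n)) | ∃ δ : ℤ, C = cycCoset q (ℓ ^ f * n) δ ∧
          (ZMod.castHom (dvd_mul_left n (ℓ ^ f)) (ZMod n)) '' C = cycCoset q n γ}.ncard =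
        f * (ℓ - 1) / ρ + 1 ∧
      -- for each m < f, exactly (ℓ-1)/ρ of them have size ℓ^(f-m-1)·ρ·τ
      (∀ m, m < f →
        {C : Set (ZMod (ℓ ^ f * n)) | ∃ δ : ℤ, C = cycCoset q (ℓ ^ f * n) δ ∧
            (ZMod.castHom (dvd_mul_left n (ℓ ^ f)) (ZMod n)) '' C = cycCoset q n γ ∧
            IsLeast {j : ℕ | 0 < j ∧ δ * (q : ℤ) ^ j ≡ δ [ZMOD ((ℓ ^ f * n : ℕ) : ℤ)]}
              (ℓ ^ (f - m - 1) * ρ * τ)}.ncard = (ℓ - 1) / ρ) ∧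
      -- exactly one of them has size τ
      {C : Set (ZMod (ℓ ^ f * n)) | ∃ δ : ℤ, C = cycCoset q (ℓ ^ f * n) δ ∧
          (ZMod.castHom (dvd_mul_left n (ℓ ^ f)) (ZMod n)) '' C = cycCoset q n γ ∧
          IsLeast {j : ℕ | 0 < j ∧ δ * (q : ℤ) ^ j ≡ δ [ZMOD ((ℓ ^ f * n : ℕ) : ℤ)]}
            τ}.ncard = 1 := by
  intro f hf
  -- basic facts
  have hτ0 : 0 < τ := hτ.1.1
  have hq2 : 2 ≤ q := by
    rw [hq]
    calc 2 ≤ p := hp.two_le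
    _ ≤ p ^ e := Nat.le_self_pow he.ne' p
  have hℓq : ¬ ℓ ∣ q := by
    intro h
    rw [hq] at h
    exact hℓp ((Nat.prime_dvd_prime_iff_eq hℓ hp).mp (hℓ.dvd_of_dvd_pow h))
  haveI : Fact ℓ.Prime := ⟨hℓ⟩
  have hqℓ0 : ((q : ZMod ℓ)) ≠ 0 := by
    rw [Ne, ZMod.natCast_eq_zero_iff]
    exact hℓq
  have hρdvd : ρ ∣ ℓ - 1 := by
    rw [hρ]
    apply orderOf_dvd_of_pow_eq_one
    rw [← pow_mul, mul_comm τ (ℓ-1), pow_mul, ZMod.pow_card_sub_one_eq_one hqℓ0, one_pow]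
  have hρ0 : 0 < ρ := by
    rcases Nat.eq_zero_or_pos ρ with h | h
    · rw [h] at hρdvd
      have := Nat.eq_zero_of_zero_dvd hρdvd
      have := hℓ.two_le
      omega
    · exact h
  have hρ1 : ρ ≠ 1 := by
    intro h1
    apply hnd
    have hx : ((q : ZMod ℓ))^τ = 1 := orderOf_eq_one_iff.mp (by rw [← hρ, h1])
    have h2 : (((q:ℤ)^τ - 1 : ℤ) : ZMod ℓ) = 0 := by push_cast; rw [hx]; ring
    exact_mod_cast (ZMod.intCast_zmod_eq_zero_iff_dvd _ ℓ).mp h2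
  have hρ2 : 2 ≤ ρ := by omega
  -- coprimality
  have hco : Nat.Coprime (ℓ^f) n :=
    Nat.Coprime.pow_left f (hℓ.coprime_iff_not_dvd.mpr hnℓ)
  have hqM : Nat.Coprime q (ℓ^f*n) := by
    rw [hq]
    apply Nat.Coprime.pow_left
    exact Nat.Coprime.mul_right
      (Nat.Coprime.pow_right f ((Nat.coprime_primes hp hℓ).mpr (fun h => hℓp h.symm)))
      (hp.coprime_iff_not_dvd.mpr hnp)
  haveI hMne : NeZero (ℓ^f*n) :=
    ⟨Nat.mul_ne_zero (pow_ne_zero f hℓ.ne_zero) hn.ne'⟩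
  -- finite order of q mod M
  obtain ⟨d, hd, hq1⟩ : ∃ d : ℕ, 0 < d ∧ ((q : ZMod (ℓ^f*n)))^d = 1 := by
    refine ⟨orderOf (ZMod.unitOfCoprime q hqM), orderOf_pos _, ?_⟩
    have := pow_orderOf_eq_one (ZMod.unitOfCoprime q hqM)
    have h2 := congrArg (Units.val) this
    rw [Units.val_pow_eq_pow_val, ZMod.coe_unitOfCoprime, Units.val_one] at h2
    exact h2
  have hdn : ((q : ZMod n))^d = 1 := by
    have := congrArg (ZMod.castHom (dvd_mul_left n (ℓ^f)) (ZMod n)) hq1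
    rw [map_pow, map_natCast, map_one] at this
    exact this
  -- Bezout and D
  obtain ⟨u, v, huv⟩ : ∃ u v : ℤ, u * ((ℓ^f : ℕ) : ℤ) + v * (n:ℤ) = 1 := by
    have := Nat.isCoprime_iff_coprime.mpr hco
    obtain ⟨u, v, huv⟩ := this
    exact ⟨u, v, huv⟩
  set D : ℤ → ℤ := fun a => γ*u*((ℓ^f : ℕ):ℤ) + a*v*(n:ℤ) with hD
  have hDγ : ∀ a : ℤ, D a ≡ γ [ZMOD (n:ℤ)] := by
    intro a
    have : (n:ℤ) ∣ γ - D a := ⟨v*(γ - a), by rw [hD]; linear_combination (-γ) * huv⟩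
    exact Int.modEq_of_dvd this
  have hDa : ∀ a : ℤ, D a ≡ a [ZMOD ((ℓ^f : ℕ):ℤ)] := by
    intro a
    have : ((ℓ^f : ℕ):ℤ) ∣ a - D a := ⟨u*(a - γ), by rw [hD]; linear_combination (-a) * huv⟩
    exact Int.modEq_of_dvd this
  have harith : ∀ j : ℕ, j + j*(d-1) = d*j := by
    intro j
    cases d with
    | zero => omega
    | succ k => simp [Nat.succ_sub_one]; ring
  have hPeq : ∀ δ δ' : ℤ, cycCoset q (ℓ^f*n) δ = cycCoset q (ℓ^f*n) δ' →
      {j : ℕ | 0 < j ∧ δ * (q:ℤ)^j ≡ δ [ZMOD ((ℓ^f*n : ℕ):ℤ)]} =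
      {j : ℕ | 0 < j ∧ δ' * (q:ℤ)^j ≡ δ' [ZMOD ((ℓ^f*n : ℕ):ℤ)]} := by
    intro δ δ' hC
    obtain ⟨s1, hs1⟩ := (cycCoset_eq_iff hd hq1 δ δ').mp hC
    obtain ⟨s2, hs2⟩ := (cycCoset_eq_iff hd hq1 δ' δ).mp hC.symm
    ext j
    simp only [Set.mem_setOf_eq]
    exact ⟨fun h => ⟨h.1, period_congr hs1 h.2⟩, fun h => ⟨h.1, period_congr hs2 h.2⟩⟩
  have hprojD : ∀ a : ℤ, (ZMod.castHom (dvd_mul_left n (ℓ^f)) (ZMod n)) ''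
      (cycCoset q (ℓ^f*n) (D a)) = cycCoset q n γ := by
    intro a
    rw [proj_cycCoset]
    symm
    apply (cycCoset_eq_iff hd hdn γ (D a)).mpr
    refine ⟨0, ?_⟩
    rw [pow_zero, mul_one]
    exact (modEq_iff_cast _ _).mp (hDγ a)
  have hnorm : ∀ δ : ℤ, cycCoset q n δ = cycCoset q n γ →
      ∃ a : ℤ, cycCoset q (ℓ^f*n) δ = cycCoset q (ℓ^f*n) (D a) := by
    intro δ hδ
    obtain ⟨j, hj⟩ := (cycCoset_eq_iff hd hdn γ δ).mp hδ.symm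
    set a : ℤ := δ * (q:ℤ)^(j*(d-1)) with ha
    have h1 : cycCoset q (ℓ^f*n) δ = cycCoset q (ℓ^f*n) a := by
      apply (cycCoset_eq_iff hd hq1 δ a).mpr
      exact ⟨j*(d-1), by rw [ha]; push_cast; ring⟩
    have h2 : a ≡ γ [ZMOD (n:ℤ)] := by
      rw [modEq_iff_cast]
      rw [ha]
      push_cast
      rw [hj, mul_assoc, ← pow_add, harith j, pow_mul, hdn, one_pow, mul_one]
    have h3 : D a ≡ a [ZMOD ((ℓ^f*n : ℕ):ℤ)] := by
      rw [crt_split hco]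
      exact ⟨hDa a, (hDγ a).trans h2.symm⟩
    refine ⟨a, h1.trans ?_⟩
    apply (cycCoset_eq_iff hd hq1 a (D a)).mpr
    exact ⟨0, by rw [pow_zero, mul_one]; exact (modEq_iff_cast _ _).mp h3⟩
  have hSmem : ∀ C : Set (ZMod (ℓ^f*n)),
      (∃ δ : ℤ, C = cycCoset q (ℓ^f*n) δ ∧
        (ZMod.castHom (dvd_mul_left n (ℓ^f)) (ZMod n)) '' C = cycCoset q n γ) ↔
      (∃ a : ℤ, C = cycCoset q (ℓ^f*n) (D a)) := by
    intro C
    constructor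
    · rintro ⟨δ, rfl, hπ⟩
      rw [proj_cycCoset] at hπ
      exact hnorm δ hπ
    · rintro ⟨a, rfl⟩
      exact ⟨D a, rfl, hprojD a⟩
  have hBgen : ∀ (V : ℕ) (C : Set (ZMod (ℓ^f*n))),
      (∃ δ : ℤ, C = cycCoset q (ℓ^f*n) δ ∧
        (ZMod.castHom (dvd_mul_left n (ℓ^f)) (ZMod n)) '' C = cycCoset q n γ ∧
        IsLeast {j : ℕ | 0 < j ∧ δ * (q:ℤ)^j ≡ δ [ZMOD ((ℓ^f*n : ℕ):ℤ)]} V) ↔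
      (∃ a : ℤ, C = cycCoset q (ℓ^f*n) (D a) ∧
        IsLeast {j : ℕ | 0 < j ∧ D a * (q:ℤ)^j ≡ D a [ZMOD ((ℓ^f*n : ℕ):ℤ)]} V) := by
    intro V C
    constructor
    · rintro ⟨δ, rfl, hπ, hl⟩
      rw [proj_cycCoset] at hπ
      obtain ⟨a, hCa⟩ := hnorm δ hπ
      exact ⟨a, hCa, (hPeq δ (D a) hCa) ▸ hl⟩
    · rintro ⟨a, rfl, hl⟩
      exact ⟨D a, rfl, hprojD a, hl⟩
  have hvlt : ∀ a : ℤ, ¬ ((ℓ:ℤ)^f ∣ a) → a ≠ 0 ∧ padicValInt ℓ a < f := by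
    intro a h
    have ha : a ≠ 0 := by rintro rfl; exact h (dvd_zero _)
    refine ⟨ha, ?_⟩
    by_contra hge
    push_neg at hge
    exact h ((pow_dvd_pow (ℓ:ℤ) hge).trans (padicValInt_dvd a))
  have hdecomp : ∀ a : ℤ, a ≠ 0 → ∃ b : ℤ,
      a = (ℓ:ℤ)^(padicValInt ℓ a) * b ∧ ¬ (ℓ:ℤ) ∣ b := by
    intro a ha
    obtain ⟨b, hb⟩ := padicValInt_dvd (p := ℓ) a
    refine ⟨b, hb, ?_⟩
    rintro ⟨c, rfl⟩
    have h2 : (ℓ:ℤ)^(padicValInt ℓ a + 1) ∣ a := by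
      refine ⟨c, ?_⟩
      conv_lhs => rw [hb]
      ring
    rcases (padicValInt_dvd_iff _ a).mp h2 with h | h
    · exact ha h
    · omega
  have hunit : ∀ b : ℤ, ¬(ℓ:ℤ) ∣ b → ∀ s : ℕ, IsUnit ((b : ZMod (ℓ^s))) := by
    intro b hb s
    have hcop : IsCoprime ((ℓ:ℤ)^s) b :=
      (((Nat.prime_iff_prime_int.mp hℓ).coprime_iff_not_dvd).mpr hb).pow_left
    obtain ⟨w, z, hwz⟩ := hcop
    apply IsUnit.of_mul_eq_one ((z : ZMod (ℓ^s)))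
    have hcast := congrArg (fun t : ℤ => ((t : ZMod (ℓ^s)))) hwz
    push_cast at hcast
    have hz : ((ℓ:ZMod (ℓ^s)))^s = 0 := by
      have h0 : ((ℓ^s : ℕ) : ZMod (ℓ^s)) = 0 := ZMod.natCast_self _
      push_cast at h0
      exact h0
    rw [hz, mul_zero, zero_add] at hcast
    rw [mul_comm]
    exact hcast
  have hcancel : ∀ m : ℕ, m ≤ f → ∀ x y : ℤ,
      ((ℓ:ℤ)^m * x ≡ (ℓ:ℤ)^m * y [ZMOD ((ℓ^f : ℕ):ℤ)] ↔
        x ≡ y [ZMOD ((ℓ^(f-m) : ℕ):ℤ)]) := by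
    intro m hm x y
    rw [Int.modEq_iff_dvd, Int.modEq_iff_dvd]
    have he : ((ℓ^f : ℕ):ℤ) = (ℓ:ℤ)^m * ((ℓ^(f-m) : ℕ):ℤ) := by
      push_cast
      rw [← pow_add]
      congr 1
      omega
    rw [he, show (ℓ:ℤ)^m*y - (ℓ:ℤ)^m*x = (ℓ:ℤ)^m * (y - x) from by ring]
    exact mul_dvd_mul_iff_left (pow_ne_zero _ (by exact_mod_cast hℓ.ne_zero))
  have hvm_inj : ∀ m₁ m₂, m₁ < f → m₂ < f →
      ℓ^(f-m₁-1)*ρ*τ = ℓ^(f-m₂-1)*ρ*τ → m₁ = m₂ := by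
    intro m₁ m₂ h1 h2 h
    have hρτ : 0 < ρ*τ := by positivity
    have h3 : ℓ^(f-m₁-1) = ℓ^(f-m₂-1) := by
      apply Nat.eq_of_mul_eq_mul_right hρτ
      rw [← mul_assoc, ← mul_assoc]
      exact h
    have := Nat.pow_right_injective hℓ.two_le h3
    omega
  have hvm_ne : ∀ m, m < f → ℓ^(f-m-1) * ρ * τ ≠ τ := by
    intro m hm h
    have h1 : ℓ^(f-m-1)*ρ = 1 := by
      apply Nat.eq_of_mul_eq_mul_right hτ0
      rw [one_mul]
      exact h
    have h2 : ρ ∣ 1 := Dvd.intro_left _ h1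
    have := Nat.dvd_one.mp h2
    omega
  -- dvd transfer helper
  have hdvd_cast : ∀ a : ℤ, ((ℓ:ℤ)^f ∣ a) → (((ℓ^f : ℕ):ℤ) ∣ a) := by
    intro a h; exact_mod_cast h
  -- singleton set characterization
  have hTeq : {C : Set (ZMod (ℓ^f*n)) | ∃ δ : ℤ, C = cycCoset q (ℓ^f*n) δ ∧
      (ZMod.castHom (dvd_mul_left n (ℓ^f)) (ZMod n)) '' C = cycCoset q n γ ∧
      IsLeast {j : ℕ | 0 < j ∧ δ * (q:ℤ)^j ≡ δ [ZMOD ((ℓ^f*n : ℕ):ℤ)]} τ}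
      = {cycCoset q (ℓ^f*n) (D 0)} := by
    ext C
    simp only [Set.mem_setOf_eq, Set.mem_singleton_iff]
    rw [hBgen τ C]
    constructor
    · rintro ⟨a, rfl, hl⟩
      have hmem := hl.1.2
      rw [per_iff hco hτ hDγ hDa] at hmem
      have hdvd : (ℓ:ℤ)^f ∣ a := by
        have hcop : IsCoprime ((ℓ:ℤ)^f) ((q:ℤ)^τ - 1) :=
          (((Nat.prime_iff_prime_int.mp hℓ).coprime_iff_not_dvd).mpr hnd).pow_left
        exact hcop.dvd_of_dvd_mul_right hmem.2
      apply (cosetD_eq_iff hd hq1 hco hτ hDγ hDa a 0).mpr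
      refine ⟨0, ?_⟩
      simpa using ((Int.modEq_zero_iff_dvd).mpr hdvd).symm
    · rintro rfl
      exact ⟨0, rfl, least_zero hco hτ hDγ hDa (dvd_zero _)⟩
  -- disjointness helper : two least values on same coset agree
  have huniq : ∀ (C : Set (ZMod (ℓ^f*n))) (V₁ V₂ : ℕ),
      (∃ a : ℤ, C = cycCoset q (ℓ^f*n) (D a) ∧
        IsLeast {j : ℕ | 0 < j ∧ D a * (q:ℤ)^j ≡ D a [ZMOD ((ℓ^f*n : ℕ):ℤ)]} V₁) →
      (∃ a : ℤ, C = cycCoset q (ℓ^f*n) (D a) ∧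
        IsLeast {j : ℕ | 0 < j ∧ D a * (q:ℤ)^j ≡ D a [ZMOD ((ℓ^f*n : ℕ):ℤ)]} V₂) →
      V₁ = V₂ := by
    rintro C V₁ V₂ ⟨a, rfl, h1⟩ ⟨b, hab, h2⟩
    have hP := hPeq (D a) (D b) hab
    rw [hP] at h1
    exact h1.unique h2
  have hqco' : ∀ s : ℕ, Nat.Coprime q (ℓ^s) := by
    intro s
    rw [hq]
    exact Nat.Coprime.pow _ _ ((Nat.coprime_primes hp hℓ).mpr (fun h => hℓp h.symm))
  have hBcount : ∀ m, m < f →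
      {C : Set (ZMod (ℓ^f*n)) | ∃ δ : ℤ, C = cycCoset q (ℓ^f*n) δ ∧
        (ZMod.castHom (dvd_mul_left n (ℓ^f)) (ZMod n)) '' C = cycCoset q n γ ∧
        IsLeast {j : ℕ | 0 < j ∧ δ * (q:ℤ)^j ≡ δ [ZMOD ((ℓ^f*n : ℕ):ℤ)]}
          (ℓ^(f-m-1) * ρ * τ)}.ncard = (ℓ-1)/ρ := by
    intro m hm
    haveI : NeZero (ℓ^(f-m)) := ⟨pow_ne_zero _ hℓ.ne_zero⟩
    have hs1 : 1 ≤ f - m := by omega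
    set U : (ZMod (ℓ^(f-m)))ˣ := (ZMod.unitOfCoprime q (hqco' (f-m)))^τ with hUdef
    have hU : (U : ZMod (ℓ^(f-m))) = (q : ZMod (ℓ^(f-m)))^τ := by
      rw [hUdef, Units.val_pow_eq_pow_val, ZMod.coe_unitOfCoprime]
    obtain ⟨hUpow, hUord⟩ := unit_order hℓ hℓ2 hq2 hτ0 hρ0 hρ hv hs1 U hU
    set lu : (ZMod (ℓ^(f-m)))ˣ → ℤ := fun w => (((w : ZMod (ℓ^(f-m))).val : ℕ) : ℤ)
      with hludef
    have hlu_nd : ∀ w, ¬ (ℓ:ℤ) ∣ lu w := by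
      intro w hw
      simp only [hludef] at hw
      have h1 : ℓ ∣ (w : ZMod (ℓ^(f-m))).val := by exact_mod_cast hw
      have h2 : Nat.Coprime ((w : ZMod (ℓ^(f-m))).val) (ℓ^(f-m)) :=
        ZMod.val_coe_unit_coprime w
      have h3 : ℓ ∣ Nat.gcd ((w : ZMod (ℓ^(f-m))).val) (ℓ^(f-m)) :=
        Nat.dvd_gcd h1 (dvd_pow_self ℓ (by omega))
      rw [h2] at h3
      have := Nat.le_of_dvd one_pos h3
      have := hℓ.two_le
      omega
    have hlu_ne : ∀ w, lu w ≠ 0 := fun w h => hlu_nd w (h ▸ dvd_zero _)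
    have hlu_val : ∀ w, padicValInt ℓ ((ℓ:ℤ)^m * lu w) = m := by
      intro w
      rw [padicValInt.mul (pow_ne_zero m (by exact_mod_cast hℓ.ne_zero)) (hlu_ne w)]
      have h1 : padicValInt ℓ ((ℓ:ℤ)^m) = m := by
        have h0 : ((ℓ:ℤ)^m) = ((ℓ^m : ℕ) : ℤ) := by push_cast; ring
        rw [h0, padicValInt.of_nat, padicValNat.prime_pow]
      rw [h1, padicValInt.eq_zero_of_not_dvd (hlu_nd w)]
      omega
    have hvalcast : ∀ w : (ZMod (ℓ^(f-m)))ˣ,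
        ((lu w : ℤ) : ZMod (ℓ^(f-m))) = (w : ZMod (ℓ^(f-m))) := by
      intro w
      rw [hludef]
      push_cast
      simp [ZMod.natCast_val, ZMod.cast_id]
    set Φ : (ZMod (ℓ^(f-m)))ˣ → Set (ZMod (ℓ^f*n)) :=
      fun w => cycCoset q (ℓ^f*n) (D ((ℓ:ℤ)^m * lu w)) with hΦdef
    have hΦiff : ∀ u1 u2, Φ u1 = Φ u2 ↔ ∃ k : ℕ, u2 = u1 * U^k := by
      intro u1 u2
      rw [hΦdef]
      simp only []
      rw [cosetD_eq_iff hd hq1 hco hτ hDγ hDa]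
      constructor
      · rintro ⟨k, hk⟩
        refine ⟨k, ?_⟩
        rw [show (ℓ:ℤ)^m * lu u1 * (q:ℤ)^(τ*k) = (ℓ:ℤ)^m * (lu u1 * (q:ℤ)^(τ*k))
            from by ring, hcancel m (by omega)] at hk
        have hc : (u2 : ZMod (ℓ^(f-m))) =
            (u1 : ZMod (ℓ^(f-m))) * ((q : ZMod (ℓ^(f-m))))^(τ*k) := by
          calc (u2 : ZMod (ℓ^(f-m))) = ((lu u2 : ℤ) : ZMod (ℓ^(f-m))) := (hvalcast u2).symm
          _ = (((lu u1 * (q:ℤ)^(τ*k) : ℤ)) : ZMod (ℓ^(f-m))) := (modEq_iff_cast _ _).mp hk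
          _ = (u1 : ZMod (ℓ^(f-m))) * ((q : ZMod (ℓ^(f-m))))^(τ*k) := by
              push_cast
              rw [hvalcast u1]
        apply Units.ext
        rw [Units.val_mul, Units.val_pow_eq_pow_val, hU, ← pow_mul]
        exact hc
      · rintro ⟨k, rfl⟩
        refine ⟨k, ?_⟩
        rw [show (ℓ:ℤ)^m * lu u1 * (q:ℤ)^(τ*k) = (ℓ:ℤ)^m * (lu u1 * (q:ℤ)^(τ*k))
            from by ring, hcancel m (by omega), modEq_iff_cast, hvalcast (u1 * U^k)]
        push_cast
        rw [hvalcast u1, hU, ← pow_mul]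
    have hrange : Set.range Φ =
        {C : Set (ZMod (ℓ^f*n)) | ∃ δ : ℤ, C = cycCoset q (ℓ^f*n) δ ∧
          (ZMod.castHom (dvd_mul_left n (ℓ^f)) (ZMod n)) '' C = cycCoset q n γ ∧
          IsLeast {j : ℕ | 0 < j ∧ δ * (q:ℤ)^j ≡ δ [ZMOD ((ℓ^f*n : ℕ):ℤ)]}
            (ℓ^(f-m-1) * ρ * τ)} := by
      ext C
      simp only [Set.mem_range, Set.mem_setOf_eq]
      rw [hBgen]
      constructor
      · rintro ⟨w, rfl⟩
        exact ⟨(ℓ:ℤ)^m * lu w, rfl, least_nonzero hℓ hℓ2 hq2 hρ0 hρ hv hco hτ hDγ hDa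
          (mul_ne_zero (pow_ne_zero m (by exact_mod_cast hℓ.ne_zero)) (hlu_ne w))
          (hlu_val w) hm⟩
      · rintro ⟨a, rfl, hl⟩
        by_cases hdvd : (ℓ:ℤ)^f ∣ a
        · exact absurd (((least_zero hco hτ hDγ hDa hdvd).unique hl).symm) (hvm_ne m hm)
        · obtain ⟨ha0, hvf⟩ := hvlt a hdvd
          have hl' := least_nonzero hℓ hℓ2 hq2 hρ0 hρ hv hco hτ hDγ hDa ha0 rfl hvf
          have hmv : padicValInt ℓ a = m := hvm_inj _ _ hvf hm (hl'.unique hl)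
          obtain ⟨b, hb, hnb⟩ := hdecomp a ha0
          rw [hmv] at hb
          have hu := hunit b hnb (f-m)
          refine ⟨hu.unit, ?_⟩
          rw [hΦdef]
          simp only []
          apply (cosetD_eq_iff hd hq1 hco hτ hDγ hDa _ a).mpr
          refine ⟨0, ?_⟩
          rw [Nat.mul_zero, pow_zero, mul_one, hb, hcancel m (by omega),
            modEq_iff_cast, hvalcast]
          exact (IsUnit.unit_spec hu).symm
    have horbit := orbit_count U Φ _ hΦiff hrange
    rw [horbit]
    exact quot_card hℓ hs1 hρ0 hρdvd U hUord
  refine ⟨?_, fun m hm => hBcount m hm, by rw [hTeq]; exact Set.ncard_singleton _⟩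
  have hdecompS : {C : Set (ZMod (ℓ^f*n)) | ∃ δ : ℤ, C = cycCoset q (ℓ^f*n) δ ∧
      (ZMod.castHom (dvd_mul_left n (ℓ^f)) (ZMod n)) '' C = cycCoset q n γ} =
      (⋃ m ∈ Finset.range f, {C : Set (ZMod (ℓ^f*n)) | ∃ δ : ℤ, C = cycCoset q (ℓ^f*n) δ ∧
        (ZMod.castHom (dvd_mul_left n (ℓ^f)) (ZMod n)) '' C = cycCoset q n γ ∧
        IsLeast {j : ℕ | 0 < j ∧ δ * (q:ℤ)^j ≡ δ [ZMOD ((ℓ^f*n : ℕ):ℤ)]}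
          (ℓ^(f-m-1) * ρ * τ)}) ∪
      {C : Set (ZMod (ℓ^f*n)) | ∃ δ : ℤ, C = cycCoset q (ℓ^f*n) δ ∧
        (ZMod.castHom (dvd_mul_left n (ℓ^f)) (ZMod n)) '' C = cycCoset q n γ ∧
        IsLeast {j : ℕ | 0 < j ∧ δ * (q:ℤ)^j ≡ δ [ZMOD ((ℓ^f*n : ℕ):ℤ)]} τ} := by
    ext C
    simp only [Set.mem_setOf_eq, Set.mem_union, Set.mem_iUnion, Finset.mem_range,
      exists_prop]
    constructor
    · intro hC
      obtain ⟨a, rfl⟩ := (hSmem _).mp hC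
      by_cases hdvd : (ℓ:ℤ)^f ∣ a
      · right
        exact (hBgen τ _).mpr ⟨a, rfl, least_zero hco hτ hDγ hDa hdvd⟩
      · left
        obtain ⟨ha0, hvf⟩ := hvlt a hdvd
        exact ⟨padicValInt ℓ a, hvf, (hBgen _ _).mpr ⟨a, rfl,
          least_nonzero hℓ hℓ2 hq2 hρ0 hρ hv hco hτ hDγ hDa ha0 rfl hvf⟩⟩
    · rintro (⟨m, hm, hC⟩ | hC)
      · obtain ⟨δ, h1, h2, _⟩ := hC
        exact ⟨δ, h1, h2⟩
      · obtain ⟨δ, h1, h2, _⟩ := hC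
        exact ⟨δ, h1, h2⟩
  rw [hdecompS, Set.ncard_union_eq ?dj (Set.toFinite _) (Set.toFinite _),
    ncard_biUnion_of_disjoint _ _ ?pairwise, hTeq, Set.ncard_singleton,
    Finset.sum_congr rfl (fun m hm => hBcount m (Finset.mem_range.mp hm)),
    Finset.sum_const, Finset.card_range, smul_eq_mul, Nat.mul_div_assoc f hρdvd]
  case dj =>
    rw [Set.disjoint_left]
    intro C hC hC'
    rw [Set.mem_iUnion₂] at hC
    obtain ⟨m, hm, hCm⟩ := hC
    rw [Finset.mem_range] at hm
    exact hvm_ne m hm (huniq C _ _ ((hBgen _ _).mp hCm) ((hBgen _ _).mp hC'))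
  case pairwise =>
    intro m₁ h1 m₂ h2 hne
    rw [Set.disjoint_left]
    intro C hC hC'
    exact hne (hvm_inj m₁ m₂ (Finset.mem_range.mp h1) (Finset.mem_range.mp h2)
      (huniq C _ _ ((hBgen _ _).mp hC) ((hBgen _ _).mp hC')))
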